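/- Let W : ℝ → (ℂⁿ →L[ℂ] ℂⁿ) be the Cauchy operator of z' = A(t)z, i.e. W'(t) = A(t) ∘ W(t) and W(0) = id, where A : ℝ → (ℂⁿ →L[ℂ] ℂⁿ) is continuous. Then for every t₀ ≥ 0, every eigenvalue ρ of W(t₀) satisfies exp(−N(t₀)) ≤ |ρ| ≤ exp(N(t₀)), where N(t₀) = ∫₀^{t₀} ‖A(s)‖ ds. -/

import Mathlib

open Filter Topology intervalIntegral

/-- Gronwall-type bound for solutions of `W' = A t ∘ W`. -/
lemma cauchy_norm_bound {E : Type*} [NormedAddCommGroup E] [NormedSpace ℂ E]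
    (A : ℝ → E →L[ℂ] E) (hA : Continuous A)
    (W : ℝ → E →L[ℂ] E)
    (hW : ∀ t, HasDerivAt W ((A t).comp (W t)) t)
    (v : E) (b : ℝ) (hb : 0 ≤ b) :
    ‖W b v‖ ≤ ‖W 0 v‖ * Real.exp (∫ s in (0:ℝ)..b, ‖A s‖) := by
  set c := ‖W 0 v‖ with hc
  set I : ℝ → ℝ := fun t => ∫ s in (0:ℝ)..t, ‖A s‖ with hIdef
  have hI : ∀ t, HasDerivAt I (‖A t‖) t := fun t =>
    intervalIntegral.integral_hasDerivAt_right ((hA.norm).intervalIntegrable _ _)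
      hA.norm.aestronglyMeasurable.stronglyMeasurableAtFilter hA.norm.continuousAt
  have hf' : ∀ t, HasDerivAt (fun t => W t v) (A t (W t v)) t := by
    intro t
    have := ((ContinuousLinearMap.apply ℂ E v).restrictScalars ℝ).hasFDerivAt.comp_hasDerivAt t
      (hW t)
    simpa [Function.comp_def] using this
  have key : ∀ ε > (0:ℝ), ‖W b v‖ ≤ (c + ε) * Real.exp (I b + ε * b) := by
    intro ε hε
    set B : ℝ → ℝ := fun t => (c + ε) * Real.exp (I t + ε * t) with hBdef
    have hB : ∀ x, HasDerivAt B ((‖A x‖ + ε) * B x) x := by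
      intro x
      have h1 : HasDerivAt (fun t => I t + ε * t) (‖A x‖ + ε) x := by
        simpa [Pi.add_def] using (hI x).add ((hasDerivAt_id x).const_mul ε)
      have := (h1.exp).const_mul (c + ε)
      refine this.congr_deriv ?_
      simp [hBdef]
      try ring
    have hcpos : 0 < c + ε := lt_of_lt_of_le hε (by have h0 : (0:ℝ) ≤ c := hc ▸ norm_nonneg _; linarith)
    have hBpos : ∀ x, 0 < B x := fun x => mul_pos hcpos (Real.exp_pos _)
    have main := image_norm_le_of_norm_deriv_right_lt_deriv_boundary
      (f := fun t => W t v) (a := 0) (b := b) (f' := fun t => A t (W t v))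
      (fun t _ => (hf' t).continuousAt.continuousWithinAt)
      (fun t _ => (hf' t).hasDerivWithinAt)
      (B := B) (B' := fun x => (‖A x‖ + ε) * B x)
      (by simp [hBdef, hIdef, hc]
          try nlinarith [hε, norm_nonneg (W 0 v)])
      hB
      (by intro x hx heq
          calc ‖A x (W x v)‖ ≤ ‖A x‖ * ‖W x v‖ := (A x).le_opNorm _
            _ = ‖A x‖ * B x := by rw [heq]
            _ < (‖A x‖ + ε) * B x := by
                have := hBpos x
                nlinarith [norm_nonneg (A x)])
    exact main (Set.right_mem_Icc.2 hb)
  have htends : Tendsto (fun ε : ℝ => (c + ε) * Real.exp (I b + ε * b)) (𝓝[>] 0)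
      (𝓝 (c * Real.exp (I b))) := by
    have hcont : Continuous (fun ε : ℝ => (c + ε) * Real.exp (I b + ε * b)) := by
      continuity
    have := hcont.tendsto 0
    simp only [add_zero, zero_mul] at this
    exact this.mono_left nhdsWithin_le_nhds
  exact ge_of_tendsto htends (eventually_nhdsWithin_of_forall fun ε hε => key ε hε)

/-- consequence of Theorem 1 of the paper. Let `W` be the Cauchy operator of
`z' = A(t) z` (`W' = A(t) ∘ W`, `W 0 = id`) on `ℂⁿ` (a space `E` linearly identified with
`Fin n → ℂ`, carrying an arbitrary norm). Then for every `t₀ ≥ 0`, every eigenvalue `ρ`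
of `W t₀` satisfies `exp (−N t₀) ≤ |ρ| ≤ exp (N t₀)` with `N t₀ = ∫₀^{t₀} ‖A s‖ ds`. -/
theorem abs_eigenvalue_cauchy_bounds
    (n : ℕ) (hn : 1 ≤ n) {E : Type*} [NormedAddCommGroup E] [NormedSpace ℂ E]
    (coords : E ≃ₗ[ℂ] (Fin n → ℂ))
    (A : ℝ → E →L[ℂ] E) (hA : Continuous A)
    (W : ℝ → E →L[ℂ] E)
    (hW : ∀ t, HasDerivAt W ((A t).comp (W t)) t)
    (hW0 : W 0 = ContinuousLinearMap.id ℂ E)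
    (t₀ : ℝ) (ht₀ : 0 ≤ t₀)
    (ρ : ℂ) (v : E) (hv : v ≠ 0) (hρ : W t₀ v = ρ • v) :
    Real.exp (-∫ s in (0:ℝ)..t₀, ‖A s‖) ≤ ‖ρ‖ ∧
      ‖ρ‖ ≤ Real.exp (∫ s in (0:ℝ)..t₀, ‖A s‖) := by
  have hvpos : 0 < ‖v‖ := norm_pos_iff.2 hv
  have hnorm : ‖W t₀ v‖ = ‖ρ‖ * ‖v‖ := by
    rw [hρ, norm_smul]
  -- upper bound
  have hupper : ‖W t₀ v‖ ≤ ‖v‖ * Real.exp (∫ s in (0:ℝ)..t₀, ‖A s‖) := by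
    have := cauchy_norm_bound A hA W hW v t₀ ht₀
    simpa [hW0] using this
  -- reversed system for the lower bound
  set A₂ : ℝ → E →L[ℂ] E := fun t => -(A (t₀ - t)) with hA₂
  set W₂ : ℝ → E →L[ℂ] E := fun t => W (t₀ - t) with hW₂
  have hA₂c : Continuous A₂ := (hA.comp (continuous_const.sub continuous_id)).neg
  have hW₂' : ∀ t, HasDerivAt W₂ ((A₂ t).comp (W₂ t)) t := by
    intro t
    have hg : HasDerivAt (fun t : ℝ => t₀ - t) (-1) t := by
      simpa using (hasDerivAt_id t).const_sub t₀
    have := (hW (t₀ - t)).scomp t hg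
    refine this.congr_deriv ?_
    ext x
    simp [hA₂, hW₂]
  have hlower := cauchy_norm_bound A₂ hA₂c W₂ hW₂' v t₀ ht₀
  have hint : (∫ s in (0:ℝ)..t₀, ‖A₂ s‖) = ∫ s in (0:ℝ)..t₀, ‖A s‖ := by
    have : (∫ s in (0:ℝ)..t₀, ‖A (t₀ - s)‖) = ∫ s in t₀ - t₀..t₀ - 0, ‖A s‖ :=
      intervalIntegral.integral_comp_sub_left (fun s => ‖A s‖) t₀
    simpa [hA₂] using this
  rw [hint] at hlower
  have hlower' : ‖v‖ ≤ ‖W t₀ v‖ * Real.exp (∫ s in (0:ℝ)..t₀, ‖A s‖) := by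
    simpa [hW₂, hW0] using hlower
  set N := ∫ s in (0:ℝ)..t₀, ‖A s‖ with hN
  rw [hnorm] at hlower' hupper
  constructor
  · have h1 : 1 ≤ ‖ρ‖ * Real.exp N := by nlinarith [Real.exp_pos N]
    have hmul : Real.exp (-N) * Real.exp N = 1 := by rw [← Real.exp_add]; simp
    nlinarith [Real.exp_pos N, norm_nonneg ρ]
  · nlinarith [Real.exp_pos N]
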